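/- Let f(x) = x^m, let t ≥ 1 be an integer, assume m divides tq+1, set c := (tq+1)/m, and assume c ≤ q−1. Then for every integer s ≥ 1 one has L(tq+1)·L(s(tq+1)) = L((s+1)(tq+1)); consequently, for every integer n ≥ 1 the n-fold product of L(tq+1) with itself equals L(n(tq+1)). (This says that the curve X_f, the image of C_f under the embedding defined by the complete linear system L((tq+1)Q∞), is projectively normal.) -/

import Mathlib

open Polynomial

noncomputable section

/-- The affine coordinate ring `R = F[x][y]/(y^q + y - f(x))` of the
Artin-Schreier curve `y^q + y = f(x)`, as a quotient of `F[x][y]`. -/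
abbrev ASRing (F : Type*) [Field F] (q : ℕ) (f : F[X]) : Type _ :=
  AdjoinRoot ((X : (F[X])[X]) ^ q + X - C f)

/-- The image of `x` in `R`. -/
def ASx (F : Type*) [Field F] (q : ℕ) (f : F[X]) : ASRing F q f :=
  AdjoinRoot.of _ X

/-- The image of `y` in `R`. -/
def ASy (F : Type*) [Field F] (q : ℕ) (f : F[X]) : ASRing F q f :=
  AdjoinRoot.root _

/-- `L(s)`: the `F`-linear span in `R` of the monomials `x^i * y^j` with
`i ≥ 0`, `0 ≤ j ≤ q - 1` and `q*i + m*j ≤ s`. -/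
def Lspace (F : Type*) [Field F] (q : ℕ) (f : F[X]) (m s : ℕ) :
    Submodule F (ASRing F q f) :=
  Submodule.span F {r | ∃ i j : ℕ, j ≤ q - 1 ∧ q * i + m * j ≤ s ∧
    r = ASx F q f ^ i * ASy F q f ^ j}

/-- The Artin–Schreier relation `y^q + y = x^m` in `R`. -/
lemma AS_rel (F : Type*) [Field F] (q m : ℕ) :
    ASy F q (X ^ m) ^ q + ASy F q (X ^ m) = ASx F q (X ^ m) ^ m := by
  unfold ASy ASx
  set g := (X : (F[X])[X]) ^ q + X - C (X ^ m) with hg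
  have h : AdjoinRoot.mk g ((X : (F[X])[X]) ^ q + X - C (X ^ m)) = 0 := by
    rw [hg]; exact AdjoinRoot.mk_self
  rw [map_sub, map_add, sub_eq_zero, AdjoinRoot.mk_C, map_pow, AdjoinRoot.mk_X,
    map_pow] at h
  exact h

/-- Any monomial `x^i y^j` (with arbitrary `j`) of weight at most `s` lies in `L(s)`. -/
lemma mem_L (F : Type*) [Field F] (q m : ℕ) (hq2 : 2 ≤ q) :
    ∀ j i s : ℕ, q * i + m * j ≤ s →
      ASx F q (X ^ m) ^ i * ASy F q (X ^ m) ^ j ∈ Lspace F q (X ^ m) m s := by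
  intro j
  induction j using Nat.strong_induction_on with
  | _ j IH =>
    intro i s hw
    by_cases hj : j ≤ q - 1
    · exact Submodule.subset_span ⟨i, j, hj, hw, rfl⟩
    · obtain ⟨j', rfl⟩ : ∃ j', j = j' + q := ⟨j - q, by omega⟩
      have hy : ASy F q (X ^ m) ^ q = ASx F q (X ^ m) ^ m - ASy F q (X ^ m) :=
        eq_sub_of_add_eq (AS_rel F q m)
      have hid : ASx F q (X ^ m) ^ i * ASy F q (X ^ m) ^ (j' + q) =
          ASx F q (X ^ m) ^ (i + m) * ASy F q (X ^ m) ^ j'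
            - ASx F q (X ^ m) ^ i * ASy F q (X ^ m) ^ (j' + 1) := by
        rw [pow_add _ j' q, hy, pow_add _ i m, pow_add _ j' 1]
        ring
      rw [hid]
      refine sub_mem (IH j' (by omega) (i + m) s ?_) (IH (j' + 1) (by omega) i s ?_)
      · have e : q * (i + m) + m * j' = q * i + m * (j' + q) := by ring
        exact e.trans_le hw
      · have e : q * i + m * (j' + 1) ≤ q * i + m * (j' + q) :=
          Nat.add_le_add_left (Nat.mul_le_mul le_rfl (by omega)) _
        exact e.trans hw

/-- `L(a) * L(b) ≤ L(a+b)`. -/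
lemma L_mul_le (F : Type*) [Field F] (q m a b : ℕ) (hq2 : 2 ≤ q) :
    Lspace F q (X ^ m) m a * Lspace F q (X ^ m) m b ≤ Lspace F q (X ^ m) m (a + b) := by
  unfold Lspace
  rw [Submodule.span_mul_span]
  refine Submodule.span_le.mpr ?_
  rintro r ⟨u, hu, v, hv, rfl⟩
  obtain ⟨i, j, hj, hwa, rfl⟩ := hu
  obtain ⟨i', j', hj', hwb, rfl⟩ := hv
  show ASx F q (X ^ m) ^ i * ASy F q (X ^ m) ^ j *
      (ASx F q (X ^ m) ^ i' * ASy F q (X ^ m) ^ j') ∈ _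
  rw [SetLike.mem_coe,
    show ASx F q (X ^ m) ^ i * ASy F q (X ^ m) ^ j *
        (ASx F q (X ^ m) ^ i' * ASy F q (X ^ m) ^ j')
      = ASx F q (X ^ m) ^ (i + i') * ASy F q (X ^ m) ^ (j + j') by
        rw [pow_add, pow_add]; ring]
  refine mem_L F q m hq2 (j + j') (i + i') (a + b) ?_
  have e : q * (i + i') + m * (j + j') = (q * i + m * j) + (q * i' + m * j') := by ring
  rw [e]
  exact Nat.add_le_add hwa hwb

/-- The key reverse inclusion, monomial by monomial. -/
lemma key (F : Type*) [Field F] (q m c t s : ℕ) (hq2 : 2 ≤ q) (hm2 : 2 ≤ m)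
    (hco : Nat.Coprime m q) (hmc : m * c = t * q + 1) (hcq : c ≤ q - 1)
    (hs : 1 ≤ s) :
    ∀ I J : ℕ, J ≤ q - 1 → q * I + m * J ≤ (s + 1) * (t * q + 1) →
      ASx F q (X ^ m) ^ I * ASy F q (X ^ m) ^ J ∈
        Lspace F q (X ^ m) m (t * q + 1) * Lspace F q (X ^ m) m (s * (t * q + 1)) := by
  have hc0 : 0 < c := Nat.pos_of_ne_zero (by
    rintro rfl
    rw [Nat.mul_zero] at hmc
    exact Nat.succ_ne_zero _ hmc.symm)
  have haa : t * q + 1 ≤ s * (t * q + 1) := Nat.le_mul_of_pos_left _ (by omega)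
  intro I
  induction I using Nat.strong_induction_on with
  | _ I IH =>
    intro J hJ hW
    set x := ASx F q (X ^ m) with hx
    set y := ASy F q (X ^ m) with hy
    by_cases h2 : c ≤ J
    · -- split off y^c
      obtain ⟨J', rfl⟩ : ∃ J', J = c + J' := ⟨J - c, by omega⟩
      have hyc : y ^ c ∈ Lspace F q (X ^ m) m (t * q + 1) :=
        Submodule.subset_span ⟨0, c, hcq, by simpa using hmc.le, by simp [hy]⟩
      have hrest : x ^ I * y ^ J' ∈ Lspace F q (X ^ m) m (s * (t * q + 1)) := by
        refine Submodule.subset_span ⟨I, J', by omega, ?_, rfl⟩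
        have e : m * (c + J') = (t * q + 1) + m * J' := by rw [Nat.mul_add, hmc]
        have e2 : (s + 1) * (t * q + 1) = s * (t * q + 1) + (t * q + 1) := by ring
        linarith [hW, e.le, e.ge]
      rw [show x ^ I * y ^ (c + J') = y ^ c * (x ^ I * y ^ J') by rw [pow_add]; ring]
      exact Submodule.mul_mem_mul hyc hrest
    · by_cases h1 : q * I + m * J ≤ s * (t * q + 1)
      · -- 1 * monomial
        have h1' : (1 : ASRing F q (X ^ m)) ∈ Lspace F q (X ^ m) m (t * q + 1) :=
          Submodule.subset_span ⟨0, 0, by omega, by simp, by simp⟩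
        have hIJ : x ^ I * y ^ J ∈ Lspace F q (X ^ m) m (s * (t * q + 1)) :=
          Submodule.subset_span ⟨I, J, hJ, h1, rfl⟩
        simpa using Submodule.mul_mem_mul h1' hIJ
      · by_cases h3 : I ≤ t
        · -- x^I * y^J
          have hxI : x ^ I ∈ Lspace F q (X ^ m) m (t * q + 1) := by
            refine Submodule.subset_span ⟨I, 0, by omega, ?_, by simp [hx]⟩
            have : q * I ≤ q * t := Nat.mul_le_mul le_rfl h3
            have e : q * t = t * q := Nat.mul_comm q t
            linarith
          have hyJ : y ^ J ∈ Lspace F q (X ^ m) m (s * (t * q + 1)) := by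
            refine Submodule.subset_span ⟨0, J, hJ, ?_, by simp [hy]⟩
            have : m * J ≤ m * c := Nat.mul_le_mul le_rfl (by omega)
            linarith [hmc.le]
          exact Submodule.mul_mem_mul hxI hyJ
        · by_cases h4 : q * I + m * J < (s + 1) * (t * q + 1)
          · -- x^t * (x^(I-t) * y^J)
            obtain ⟨I'', rfl⟩ : ∃ I'', I = t + I'' := ⟨I - t, by omega⟩
            have hxt : x ^ t ∈ Lspace F q (X ^ m) m (t * q + 1) := by
              refine Submodule.subset_span ⟨t, 0, by omega, ?_, by simp [hx]⟩
              have e : q * t = t * q := Nat.mul_comm q t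
              linarith
            have hrest : x ^ I'' * y ^ J ∈ Lspace F q (X ^ m) m (s * (t * q + 1)) := by
              refine Submodule.subset_span ⟨I'', J, hJ, ?_, rfl⟩
              have e1 : q * (t + I'') = q * t + q * I'' := Nat.mul_add q t I''
              have e2 : (s + 1) * (t * q + 1) = s * (t * q + 1) + t * q + 1 := by ring
              have e3 : q * t = t * q := Nat.mul_comm q t
              linarith
            rw [show x ^ (t + I'') * y ^ J = x ^ t * (x ^ I'' * y ^ J) by
              rw [pow_add]; ring]
            exact Submodule.mul_mem_mul hxt hrest
          · -- the extremal case: use the Artin–Schreier relation and recurse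
            have hW5 : q * I + m * J = (s + 1) * (t * q + 1) := le_antisymm hW (by
              push_neg at h4; exact h4)
            have hJc : J < c := by omega
            obtain ⟨u, hu⟩ : ∃ u, (s + 1) * c = J + u := by
              refine ⟨(s + 1) * c - J, ?_⟩
              have : c ≤ (s + 1) * c := Nat.le_mul_of_pos_left _ (by omega)
              omega
            have hqI : q * I = m * u := by
              have e1 : m * ((s + 1) * c) = (s + 1) * (t * q + 1) := by
                rw [← hmc]; ring
              have e2 : m * (J + u) = m * J + m * u := Nat.mul_add m J u
              have e3 : m * J + m * u = q * I + m * J := by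
                rw [← e2, ← hu, e1, hW5]
              omega
            have hmI : m ∣ I := hco.dvd_of_dvd_mul_left ⟨u, hqI⟩
            have hIm : m ≤ I := by
              obtain ⟨d, rfl⟩ := hmI
              rcases Nat.eq_zero_or_pos d with rfl | hd
              · exfalso
                rw [Nat.mul_zero, Nat.mul_zero] at hqI
                have hu0 : u = 0 := by
                  rcases Nat.mul_eq_zero.mp hqI.symm with h | h
                  · omega
                  · exact h
                have : c ≤ (s + 1) * c := Nat.le_mul_of_pos_left _ (by omega)
                omega
              · calc m = m * 1 := (Nat.mul_one m).symm
                  _ ≤ m * d := Nat.mul_le_mul le_rfl hd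
            obtain ⟨I1, rfl⟩ : ∃ I1, I = m + I1 := ⟨I - m, by omega⟩
            obtain ⟨e, he⟩ : ∃ e, q = c + e := ⟨q - c, by omega⟩
            have hrel : y ^ q + y = x ^ m := AS_rel F q m
            have h5 : y ^ c * y ^ e + y = x ^ m := by rw [← pow_add, ← he]; exact hrel
            have hid : x ^ (m + I1) * y ^ J =
                x ^ I1 * y ^ (J + 1) + y ^ c * (x ^ I1 * y ^ (J + e)) := by
              linear_combination (-(x ^ I1 * y ^ J)) * h5
            rw [hid]
            refine add_mem ?_ ?_
            · refine IH I1 (by omega) (J + 1) (by omega) ?_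
              have h6 : m ≤ q * m := Nat.le_mul_of_pos_left _ (by omega)
              have h7 : q * (m + I1) = q * m + q * I1 := Nat.mul_add q m I1
              have h8 : m * (J + 1) = m * J + m := by ring
              linarith [hW5.le, hW5.ge]
            · have hyc : y ^ c ∈ Lspace F q (X ^ m) m (t * q + 1) :=
                Submodule.subset_span ⟨0, c, hcq, by simpa using hmc.le, by simp [hy]⟩
              have hrest : x ^ I1 * y ^ (J + e) ∈
                  Lspace F q (X ^ m) m (s * (t * q + 1)) := by
                refine Submodule.subset_span ⟨I1, J + e, by omega, ?_, rfl⟩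
                have e4 : q * m = m * c + m * e := by rw [he]; ring
                have e5 : m * (J + e) = m * J + m * e := Nat.mul_add m J e
                have e6 : q * (m + I1) = q * m + q * I1 := Nat.mul_add q m I1
                have e7 : (s + 1) * (t * q + 1) = s * (t * q + 1) + t * q + 1 := by ring
                have e8 : m * c = t * q + 1 := hmc
                linarith [hW5.le, hW5.ge]
              exact Submodule.mul_mem_mul hyc hrest

theorem stmt_13 (p k q : ℕ) (hp : p.Prime) (hk : 1 ≤ k) (hq : q = p ^ k)
    (F : Type*) [Field F] [CharP F p]
    (m : ℕ) (hm2 : 2 ≤ m) (hmp : Nat.Coprime m p) (t : ℕ) (ht : 1 ≤ t) (hdvd : m ∣ t * q + 1)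
    (c : ℕ) (hc : c = (t * q + 1) / m) (hcq : c ≤ q - 1) :
    (∀ s : ℕ, 1 ≤ s →
      Lspace F q (X ^ m) m (t * q + 1) * Lspace F q (X ^ m) m (s * (t * q + 1)) =
        Lspace F q (X ^ m) m ((s + 1) * (t * q + 1))) ∧
    (∀ n : ℕ, 1 ≤ n →
      (Lspace F q (X ^ m) m (t * q + 1)) ^ n =
        Lspace F q (X ^ m) m (n * (t * q + 1))) := by
  have hq2 : 2 ≤ q := by
    subst hq
    calc 2 ≤ p := hp.two_le
      _ ≤ p ^ k := Nat.le_self_pow (by omega) p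
  have hco : Nat.Coprime m q := by subst hq; exact hmp.pow_right k
  have hmc : m * c = t * q + 1 := by rw [hc]; exact Nat.mul_div_cancel' hdvd
  have part1 : ∀ s : ℕ, 1 ≤ s →
      Lspace F q (X ^ m) m (t * q + 1) * Lspace F q (X ^ m) m (s * (t * q + 1)) =
        Lspace F q (X ^ m) m ((s + 1) * (t * q + 1)) := by
    intro s hs
    apply le_antisymm
    · have h := L_mul_le F q m (t * q + 1) (s * (t * q + 1)) hq2
      have e : (s + 1) * (t * q + 1) = (t * q + 1) + s * (t * q + 1) := by ring
      rw [e]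
      exact h
    · refine Submodule.span_le.mpr ?_
      rintro r ⟨I, J, hJ, hW, rfl⟩
      exact key F q m c t s hq2 hm2 hco hmc hcq hs I J hJ hW
  refine ⟨part1, ?_⟩
  intro n hn
  induction n, hn using Nat.le_induction with
  | base => rw [pow_one, one_mul]
  | succ n hn ih =>
    rw [pow_succ', ih]
    exact part1 n hn
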